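/- Let p ≥ 2 be an integer. Define S₁ = Σ_{j=0}^{p−1} (1/(j+1/2))·(1/√(p−j) − 1/√(p+j+1)) and s₁ = Σ_{j=1}^{p−1} (1/j)·(1/√(p−j) − 1/√(p+j)). Then |S₁ − s₁| ≤ C·log(ep)/p^{3/2} for an absolute constant C. -/

import Mathlib

open Finset

lemma sqrt_diff_le {a b : ℝ} (ha : 0 ≤ a) (hab : a ≤ b) (hb : 0 < b) :
    Real.sqrt b - Real.sqrt a ≤ (b - a) / Real.sqrt b := by
  rw [le_div_iff₀ (Real.sqrt_pos.mpr hb)]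
  nlinarith [Real.sq_sqrt ha, Real.sq_sqrt hb.le, Real.sqrt_nonneg a,
    Real.sqrt_le_sqrt hab, Real.sqrt_nonneg b]

lemma inv_sqrt_diff {a b : ℝ} (ha : 0 < a) (hab : a ≤ b) :
    1 / Real.sqrt a - 1 / Real.sqrt b ≤ (b - a) / (Real.sqrt a * b) := by
  have hb : 0 < b := lt_of_lt_of_le ha hab
  have sa : 0 < Real.sqrt a := Real.sqrt_pos.mpr ha
  have sb : 0 < Real.sqrt b := Real.sqrt_pos.mpr hb
  have h1 : 1 / Real.sqrt a - 1 / Real.sqrt b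
      = (Real.sqrt b - Real.sqrt a) / (Real.sqrt a * Real.sqrt b) := by
    field_simp
  rw [h1]
  have h2 := sqrt_diff_le ha.le hab hb
  have hbb : Real.sqrt b * Real.sqrt b = b := Real.mul_self_sqrt hb.le
  calc (Real.sqrt b - Real.sqrt a) / (Real.sqrt a * Real.sqrt b)
      ≤ ((b - a) / Real.sqrt b) / (Real.sqrt a * Real.sqrt b) := by
        apply div_le_div_of_nonneg_right h2 (by positivity) |>.trans_eq rfl
    _ = (b - a) / (Real.sqrt a * b) := by
        have he : Real.sqrt b * (Real.sqrt a * Real.sqrt b) = Real.sqrt a * b := by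
          rw [mul_comm (Real.sqrt a) (Real.sqrt b), ← mul_assoc, hbb, mul_comm]
        rw [div_div, he]

lemma inv_sqrt_nonneg_diff {a b : ℝ} (ha : 0 < a) (hab : a ≤ b) :
    0 ≤ 1 / Real.sqrt a - 1 / Real.sqrt b := by
  have hb : 0 < b := lt_of_lt_of_le ha hab
  have : Real.sqrt a ≤ Real.sqrt b := Real.sqrt_le_sqrt hab
  have sa : 0 < Real.sqrt a := Real.sqrt_pos.mpr ha
  have : 1 / Real.sqrt b ≤ 1 / Real.sqrt a := one_div_le_one_div_of_le sa this
  linarith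

lemma sum_inv_sqrt (n : ℕ) :
    ∑ k ∈ Finset.range n, 1 / Real.sqrt ((k : ℝ) + 1) ≤ 2 * Real.sqrt n := by
  induction n with
  | zero => simp
  | succ n ih =>
    rw [Finset.sum_range_succ]
    have h : 1 / Real.sqrt ((n : ℝ) + 1) ≤ 2 * Real.sqrt (n + 1) - 2 * Real.sqrt n := by
      have ht : (0:ℝ) < (n:ℝ) + 1 := by positivity
      have st : 0 < Real.sqrt ((n:ℝ) + 1) := Real.sqrt_pos.mpr ht
      rw [div_le_iff₀ st]
      nlinarith [Real.sq_sqrt (Nat.cast_nonneg n : (0:ℝ) ≤ n), Real.sq_sqrt ht.le,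
        Real.sqrt_nonneg (n:ℝ), st, mul_nonneg (Real.sqrt_nonneg (n:ℝ)) st.le,
        sq_nonneg (Real.sqrt (n:ℝ) * Real.sqrt ((n:ℝ)+1) - ((n:ℝ) + 1/2))]
    push_cast
    linarith

lemma harm_bound (p : ℕ) (hp : 2 ≤ p) :
    ∑ j ∈ Finset.Ico 1 p, 1 / (j : ℝ) ≤ Real.log (Real.exp 1 * p) := by
  have h1 : ∑ j ∈ Finset.Ico 1 p, 1 / (j : ℝ) = (harmonic (p - 1) : ℝ) := by
    rw [harmonic_eq_sum_Icc]
    push_cast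
    rw [show Finset.Icc 1 (p-1) = Finset.Ico 1 p by
      ext x; simp only [Finset.mem_Icc, Finset.mem_Ico]; omega]
    simp [one_div]
  rw [h1, Real.log_mul (Real.exp_ne_zero 1) (by positivity), Real.log_exp]
  have h2 := harmonic_le_one_add_log (p - 1)
  have hp2 : (2:ℝ) ≤ (p:ℝ) := by exact_mod_cast hp
  have h3 : Real.log ((p:ℝ) - 1) ≤ Real.log p :=
    Real.log_le_log (by linarith) (by linarith)
  have h4 : ((p - 1 : ℕ) : ℝ) = (p : ℝ) - 1 := by
    push_cast [Nat.cast_sub (by omega : 1 ≤ p)]; ring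
  rw [h4] at h2
  linarith

lemma sum_inv_sqrt_reflect (p : ℕ) (hp : 2 ≤ p) :
    ∑ j ∈ Finset.Ico 1 p, 1 / Real.sqrt ((p : ℝ) - j) ≤ 2 * Real.sqrt p := by
  have h0 : ∑ j ∈ Finset.Ico 1 p, 1 / Real.sqrt ((p : ℝ) - j)
      ≤ ∑ j ∈ Finset.range p, 1 / Real.sqrt ((p : ℝ) - j) := by
    apply Finset.sum_le_sum_of_subset_of_nonneg
    · rw [Finset.range_eq_Ico]; exact Finset.Ico_subset_Ico (by omega) le_rfl
    · intro i _ _; positivity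
  refine h0.trans ?_
  have h1 : ∑ j ∈ Finset.range p, 1 / Real.sqrt ((p : ℝ) - j)
      = ∑ j ∈ Finset.range p, 1 / Real.sqrt ((j : ℝ) + 1) := by
    rw [← Finset.sum_range_reflect (fun k => 1 / Real.sqrt ((k : ℝ) + 1)) p]
    apply Finset.sum_congr rfl
    intro j hj
    simp only [Finset.mem_range] at hj
    congr 2
    have : ((p - 1 - j : ℕ) : ℝ) = (p : ℝ) - 1 - j := by
      have : p - 1 - j = p - (1 + j) := by omega
      rw [this, Nat.cast_sub (by omega)]; push_cast; ring
    rw [this]; ring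
  rw [h1]; exact sum_inv_sqrt p

lemma term_bound (p j : ℕ) (hp : 2 ≤ p) (hj1 : 1 ≤ j) (hjp : j < p) :
    |(1 / ((j:ℝ) + 1/2)) * (1 / Real.sqrt ((p:ℝ) - j) - 1 / Real.sqrt ((p:ℝ) + j + 1))
      - (1 / (j:ℝ)) * (1 / Real.sqrt ((p:ℝ) - j) - 1 / Real.sqrt ((p:ℝ) + j))|
    ≤ 4 / ((j:ℝ) * p * Real.sqrt ((p:ℝ) - j)) + 1 / ((j:ℝ) * ((p:ℝ) * Real.sqrt p)) := by
  have hJ1 : (1:ℝ) ≤ (j:ℝ) := by exact_mod_cast hj1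
  have hJP : (j:ℝ) + 1 ≤ (p:ℝ) := by exact_mod_cast hjp
  have hP2 : (2:ℝ) ≤ (p:ℝ) := by exact_mod_cast hp
  set J := (j:ℝ) with hJdef
  set P := (p:ℝ) with hPdef
  have ha0 : (0:ℝ) < P - J := by linarith
  have hsa : 0 < Real.sqrt (P - J) := Real.sqrt_pos.mpr ha0
  have hsP : 0 < Real.sqrt P := Real.sqrt_pos.mpr (by linarith)
  have hsc : Real.sqrt P ≤ Real.sqrt (P + J) := Real.sqrt_le_sqrt (by linarith)
  have hJ0 : (0:ℝ) < J := by linarith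
  set x := 1 / Real.sqrt (P - J) with hx
  set y := 1 / Real.sqrt (P + J + 1) with hy
  set z := 1 / Real.sqrt (P + J) with hz
  have hid : 1/(J+1/2) * (x - y) - 1/J * (x - z)
      = (1/(J+1/2) - 1/J) * (x - y) + (1/J) * (z - y) := by ring
  rw [hid]
  have hxy0 : 0 ≤ x - y := inv_sqrt_nonneg_diff ha0 (by linarith)
  have hxy : x - y ≤ 3*J/(Real.sqrt (P-J) * P) := by
    have h := inv_sqrt_diff ha0 (show P - J ≤ P + J + 1 by linarith)
    rw [show (P + J + 1) - (P - J) = 2*J+1 by ring] at h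
    refine h.trans ?_
    apply div_le_div₀ (by positivity) (by linarith) (by positivity)
    exact mul_le_mul_of_nonneg_left (by linarith) hsa.le
  have hzy0 : 0 ≤ z - y :=
    inv_sqrt_nonneg_diff (show (0:ℝ) < P + J by linarith) (by linarith)
  have hzy : z - y ≤ 1/(Real.sqrt P * P) := by
    have h := inv_sqrt_diff (show (0:ℝ) < P + J by linarith)
      (show P + J ≤ P + J + 1 by linarith)
    rw [show (P + J + 1) - (P + J) = 1 by ring] at h
    refine h.trans ?_
    apply div_le_div₀ (by norm_num) le_rfl (by positivity)
    exact mul_le_mul hsc (by linarith) (by linarith) (Real.sqrt_nonneg _)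
  have huv : |1/(J+1/2) - 1/J| ≤ 1/(J*J) := by
    have he : 1/J - 1/(J+1/2) = (1/2)/(J*(J+1/2)) := by
      field_simp
      ring
    rw [abs_sub_comm, abs_of_nonneg (by rw [he]; positivity), he]
    apply div_le_div₀ (by positivity) (by norm_num) (by positivity) (by nlinarith)
  calc |(1/(J+1/2) - 1/J) * (x - y) + (1/J) * (z - y)|
      ≤ |1/(J+1/2) - 1/J| * (x - y) + (1/J) * (z - y) := by
        refine (abs_add_le _ _).trans ?_
        rw [abs_mul, abs_mul, abs_of_nonneg hxy0, abs_of_nonneg hzy0,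
          abs_of_nonneg (by positivity : (0:ℝ) ≤ 1/J)]
    _ ≤ (1/(J*J)) * (3*J/(Real.sqrt (P-J) * P)) + (1/J) * (1/(Real.sqrt P * P)) := by
        refine add_le_add ?_ ?_
        · exact mul_le_mul huv hxy hxy0 (by positivity)
        · exact mul_le_mul_of_nonneg_left hzy (by positivity)
    _ ≤ 4 / (J * P * Real.sqrt (P - J)) + 1 / (J * (P * Real.sqrt P)) := by
        have e1 : (1/(J*J)) * (3*J/(Real.sqrt (P-J) * P)) = 3 / (J * P * Real.sqrt (P-J)) := by
          field_simp
        have e2 : (1/J) * (1/(Real.sqrt P * P)) = 1 / (J * (P * Real.sqrt P)) := by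
          rw [one_div_mul_one_div, mul_comm (Real.sqrt P) P]
        rw [e1, e2]
        gcongr <;> norm_num

lemma split_bound (p j : ℕ) (hp : 2 ≤ p) (hj1 : 1 ≤ j) (hjp : j < p) :
    4 / ((j:ℝ) * p * Real.sqrt ((p:ℝ) - j))
      ≤ 6 / ((p:ℝ) * Real.sqrt p) * (1/(j:ℝ))
        + 8 / ((p:ℝ) * (p:ℝ)) * (1 / Real.sqrt ((p:ℝ) - j)) := by
  have hJ1 : (1:ℝ) ≤ (j:ℝ) := by exact_mod_cast hj1
  have hJP : (j:ℝ) + 1 ≤ (p:ℝ) := by exact_mod_cast hjp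
  have hP2 : (2:ℝ) ≤ (p:ℝ) := by exact_mod_cast hp
  have ha0 : (0:ℝ) < (p:ℝ) - j := by linarith
  have hsa : 0 < Real.sqrt ((p:ℝ) - j) := Real.sqrt_pos.mpr ha0
  have hsP : 0 < Real.sqrt (p:ℝ) := Real.sqrt_pos.mpr (by linarith)
  have hJ0 : (0:ℝ) < (j:ℝ) := by linarith
  rcases le_or_gt (2 * j) p with hcase | hcase
  · have h2 : 2 * (j:ℝ) ≤ (p:ℝ) := by exact_mod_cast hcase
    have hs2 : Real.sqrt (p:ℝ) ≤ Real.sqrt 2 * Real.sqrt ((p:ℝ) - j) := by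
      rw [← Real.sqrt_mul (by norm_num)]
      exact Real.sqrt_le_sqrt (by linarith)
    have hsqrt2 : Real.sqrt 2 ≤ 3/2 := by
      nlinarith [Real.sq_sqrt (by norm_num : (0:ℝ) ≤ 2), Real.sqrt_nonneg 2]
    have h3 : Real.sqrt (p:ℝ) ≤ 3/2 * Real.sqrt ((p:ℝ) - j) :=
      hs2.trans (by nlinarith)
    have key : 4 / ((j:ℝ) * p * Real.sqrt ((p:ℝ) - j))
        ≤ 6 / ((p:ℝ) * Real.sqrt p) * (1/(j:ℝ)) := by
      rw [div_mul_div_comm, mul_one]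
      rw [div_le_div_iff₀ (by positivity) (by positivity)]
      nlinarith [mul_le_mul_of_nonneg_left h3
        (by positivity : (0:ℝ) ≤ 4 * ((j:ℝ) * (p:ℝ)))]
    have hpos : 0 ≤ 8 / ((p:ℝ) * p) * (1 / Real.sqrt ((p:ℝ) - j)) := by positivity
    linarith
  · have h2 : (p:ℝ) ≤ 2 * (j:ℝ) := by exact_mod_cast hcase.le
    have key : 4 / ((j:ℝ) * p * Real.sqrt ((p:ℝ) - j))
        ≤ 8 / ((p:ℝ) * p) * (1 / Real.sqrt ((p:ℝ) - j)) := by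
      rw [div_mul_div_comm, mul_one]
      rw [div_le_div_iff₀ (by positivity) (by positivity)]
      nlinarith [mul_le_mul_of_nonneg_right h2
        (by positivity : (0:ℝ) ≤ (p:ℝ) * Real.sqrt ((p:ℝ) - j))]
    have hpos : 0 ≤ 6 / ((p:ℝ) * Real.sqrt p) * (1/(j:ℝ)) := by positivity
    linarith

lemma full_term (p j : ℕ) (hp : 2 ≤ p) (hj1 : 1 ≤ j) (hjp : j < p) :
    |(1 / ((j:ℝ) + 1/2)) * (1 / Real.sqrt ((p:ℝ) - j) - 1 / Real.sqrt ((p:ℝ) + j + 1))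
      - (1 / (j:ℝ)) * (1 / Real.sqrt ((p:ℝ) - j) - 1 / Real.sqrt ((p:ℝ) + j))|
    ≤ 7 / ((p:ℝ) * Real.sqrt p) * (1/(j:ℝ))
      + 8 / ((p:ℝ) * (p:ℝ)) * (1 / Real.sqrt ((p:ℝ) - j)) := by
  have h1 := term_bound p j hp hj1 hjp
  have h2 := split_bound p j hp hj1 hjp
  have hJ0 : (0:ℝ) < (j:ℝ) := by
    have : (1:ℝ) ≤ (j:ℝ) := by exact_mod_cast hj1
    linarith
  have hP0 : (0:ℝ) < (p:ℝ) := by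
    have : (2:ℝ) ≤ (p:ℝ) := by exact_mod_cast hp
    linarith
  have hsP : 0 < Real.sqrt (p:ℝ) := Real.sqrt_pos.mpr hP0
  have he : 1 / ((j:ℝ) * ((p:ℝ) * Real.sqrt p)) = 1 / ((p:ℝ) * Real.sqrt p) * (1/(j:ℝ)) := by
    rw [one_div_mul_one_div, mul_comm]
  have hsum : 6 / ((p:ℝ) * Real.sqrt p) * (1/(j:ℝ)) + 1 / ((p:ℝ) * Real.sqrt p) * (1/(j:ℝ))
      = 7 / ((p:ℝ) * Real.sqrt p) * (1/(j:ℝ)) := by ring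
  linarith

theorem stmt19 : ∃ C : ℝ, ∀ p : ℕ, 2 ≤ p →
    |(∑ j ∈ Finset.range p,
        (1 / ((j:ℝ) + 1/2)) * (1 / Real.sqrt ((p:ℝ) - j) - 1 / Real.sqrt ((p:ℝ) + j + 1))) -
     (∑ j ∈ Finset.Ico 1 p,
        (1 / (j:ℝ)) * (1 / Real.sqrt ((p:ℝ) - j) - 1 / Real.sqrt ((p:ℝ) + j)))| ≤
      C * Real.log (Real.exp 1 * p) / (p:ℝ) ^ ((3:ℝ)/2) := by
  use 100
  intro p hp
  have hP2 : (2:ℝ) ≤ (p:ℝ) := by exact_mod_cast hp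
  have hP0 : (0:ℝ) < (p:ℝ) := by linarith
  have hsP : 0 < Real.sqrt (p:ℝ) := Real.sqrt_pos.mpr hP0
  have hL1 : 1 ≤ Real.log (Real.exp 1 * p) := by
    rw [Real.log_mul (Real.exp_ne_zero 1) (by positivity), Real.log_exp]
    have := Real.log_nonneg (by linarith : (1:ℝ) ≤ (p:ℝ))
    linarith
  have hpow : (p:ℝ) ^ ((3:ℝ)/2) = (p:ℝ) * Real.sqrt (p:ℝ) := by
    have h : (p:ℝ) * Real.sqrt (p:ℝ) = (p:ℝ) ^ (1:ℝ) * (p:ℝ) ^ ((1:ℝ)/2) := by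
      rw [Real.rpow_one, Real.sqrt_eq_rpow]
    rw [h, ← Real.rpow_add hP0]
    norm_num
  rw [hpow]
  -- split off j = 0
  rw [Finset.range_eq_Ico, Finset.sum_eq_sum_Ico_succ_bot (by omega : 0 < p)]
  have hT0 : |(1 : ℝ) / ((0:ℕ) + 1/2) *
        (1 / Real.sqrt ((p:ℝ) - (0:ℕ)) - 1 / Real.sqrt ((p:ℝ) + (0:ℕ) + 1))|
      ≤ 2 / ((p:ℝ) * Real.sqrt p) := by
    have h0 : ((0:ℕ) : ℝ) = 0 := by norm_num
    rw [h0]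
    have hd : 0 ≤ 1 / Real.sqrt (p:ℝ) - 1 / Real.sqrt ((p:ℝ) + 1) :=
      inv_sqrt_nonneg_diff hP0 (by linarith)
    have hb := inv_sqrt_diff hP0 (show (p:ℝ) ≤ (p:ℝ) + 1 by linarith)
    rw [show ((p:ℝ) + 1) - p = 1 by ring] at hb
    have hb2 : 1 / (Real.sqrt (p:ℝ) * ((p:ℝ) + 1)) ≤ 1 / ((p:ℝ) * Real.sqrt p) := by
      apply div_le_div₀ (by norm_num) le_rfl (by positivity)
      rw [mul_comm ((p:ℝ)) (Real.sqrt (p:ℝ))]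
      exact mul_le_mul_of_nonneg_left (by linarith) hsP.le
    have : (1:ℝ) / (0 + 1/2) = 2 := by norm_num
    rw [this, show (p:ℝ) - 0 = (p:ℝ) by ring, show (p:ℝ) + 0 + 1 = (p:ℝ) + 1 by ring]
    rw [abs_mul, abs_of_nonneg hd, abs_of_nonneg (by norm_num : (0:ℝ) ≤ 2)]
    calc 2 * (1 / Real.sqrt (p:ℝ) - 1 / Real.sqrt ((p:ℝ) + 1))
        ≤ 2 * (1 / ((p:ℝ) * Real.sqrt p)) := by
          have := hb.trans hb2
          linarith
      _ = 2 / ((p:ℝ) * Real.sqrt p) := by ring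
  have hsum1 := harm_bound p hp
  have hsum2 := sum_inv_sqrt_reflect p hp
  have hterm : ∀ j ∈ Finset.Ico 1 p,
      |(1 / ((j:ℝ) + 1/2)) * (1 / Real.sqrt ((p:ℝ) - j) - 1 / Real.sqrt ((p:ℝ) + j + 1))
        - (1 / (j:ℝ)) * (1 / Real.sqrt ((p:ℝ) - j) - 1 / Real.sqrt ((p:ℝ) + j))|
      ≤ 7 / ((p:ℝ) * Real.sqrt p) * (1/(j:ℝ))
        + 8 / ((p:ℝ) * (p:ℝ)) * (1 / Real.sqrt ((p:ℝ) - j)) := by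
    intro j hj
    rw [Finset.mem_Ico] at hj
    exact full_term p j hp hj.1 hj.2
  set L := Real.log (Real.exp 1 * (p:ℝ)) with hLdef
  calc |((1 : ℝ) / ((0:ℕ) + 1/2) *
          (1 / Real.sqrt ((p:ℝ) - (0:ℕ)) - 1 / Real.sqrt ((p:ℝ) + (0:ℕ) + 1))
        + ∑ j ∈ Finset.Ico 1 p,
            (1 / ((j:ℝ) + 1/2)) * (1 / Real.sqrt ((p:ℝ) - j) - 1 / Real.sqrt ((p:ℝ) + j + 1)))
        - ∑ j ∈ Finset.Ico 1 p,
            (1 / (j:ℝ)) * (1 / Real.sqrt ((p:ℝ) - j) - 1 / Real.sqrt ((p:ℝ) + j))|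
      ≤ |(1 : ℝ) / ((0:ℕ) + 1/2) *
          (1 / Real.sqrt ((p:ℝ) - (0:ℕ)) - 1 / Real.sqrt ((p:ℝ) + (0:ℕ) + 1))|
        + |∑ j ∈ Finset.Ico 1 p,
            ((1 / ((j:ℝ) + 1/2)) * (1 / Real.sqrt ((p:ℝ) - j) - 1 / Real.sqrt ((p:ℝ) + j + 1))
             - (1 / (j:ℝ)) * (1 / Real.sqrt ((p:ℝ) - j) - 1 / Real.sqrt ((p:ℝ) + j)))| := by
        rw [Finset.sum_sub_distrib, add_sub_assoc]
        exact abs_add_le _ _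
    _ ≤ 2 / ((p:ℝ) * Real.sqrt p)
        + ∑ j ∈ Finset.Ico 1 p,
            (7 / ((p:ℝ) * Real.sqrt p) * (1/(j:ℝ))
              + 8 / ((p:ℝ) * (p:ℝ)) * (1 / Real.sqrt ((p:ℝ) - j))) := by
        refine add_le_add hT0 ?_
        exact (Finset.abs_sum_le_sum_abs _ _).trans (Finset.sum_le_sum hterm)
    _ = 2 / ((p:ℝ) * Real.sqrt p)
        + 7 / ((p:ℝ) * Real.sqrt p) * (∑ j ∈ Finset.Ico 1 p, 1/(j:ℝ))
        + 8 / ((p:ℝ) * (p:ℝ)) * (∑ j ∈ Finset.Ico 1 p, 1 / Real.sqrt ((p:ℝ) - j)) := by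
        rw [Finset.sum_add_distrib, ← Finset.mul_sum, ← Finset.mul_sum]; ring
    _ ≤ 2 / ((p:ℝ) * Real.sqrt p)
        + 7 / ((p:ℝ) * Real.sqrt p) * L
        + 8 / ((p:ℝ) * (p:ℝ)) * (2 * Real.sqrt (p:ℝ)) := by
        refine add_le_add (add_le_add le_rfl ?_) ?_
        · exact mul_le_mul_of_nonneg_left hsum1 (by positivity)
        · exact mul_le_mul_of_nonneg_left hsum2 (by positivity)
    _ ≤ 100 * L / ((p:ℝ) * Real.sqrt (p:ℝ)) := by
        have hss : Real.sqrt (p:ℝ) * Real.sqrt (p:ℝ) = (p:ℝ) := Real.mul_self_sqrt hP0.le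
        have e3 : 8 / ((p:ℝ) * (p:ℝ)) * (2 * Real.sqrt (p:ℝ)) = 16 / ((p:ℝ) * Real.sqrt (p:ℝ)) := by
          rw [div_mul_eq_mul_div, div_eq_div_iff (by positivity) (by positivity)]
          linear_combination (16 * (p:ℝ)) * hss
        rw [e3]
        have hD : (0:ℝ) < (p:ℝ) * Real.sqrt (p:ℝ) := by positivity
        have hre : 100 * L / ((p:ℝ) * Real.sqrt (p:ℝ))
            - (2 / ((p:ℝ) * Real.sqrt p) + 7 / ((p:ℝ) * Real.sqrt p) * L
               + 16 / ((p:ℝ) * Real.sqrt (p:ℝ)))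
            = (93 * L - 18) / ((p:ℝ) * Real.sqrt (p:ℝ)) := by ring
        have hnn : 0 ≤ (93 * L - 18) / ((p:ℝ) * Real.sqrt (p:ℝ)) :=
          div_nonneg (by linarith) hD.le
        linarith
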